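/- If A_{f,φ} is a bounded Liouville weighted composition operator on H², then sup over w ∈ 𝔻 of |f(w)|² |φ′(w)|² (1 − |w|²) (1 + |φ(w)|²)/(1 − |φ(w)|²)³ is finite; indeed this quantity is bounded by ‖A_{f,φ}‖² for each w. -/

import Mathlib

open Metric ComplexConjugate

noncomputable abbrev H2 : Type := lp (fun _ : ℕ => ℂ) 2

noncomputable def hardyEval (h : H2) (z : ℂ) : ℂ := ∑' n : ℕ, h n * z ^ n

private lemma summable_sq_geo {t : ℝ} (ht0 : 0 ≤ t) (ht : t < 1) :
    Summable fun n : ℕ => (n : ℝ) ^ 2 * t ^ (n - 1) := by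
  have hnorm : ‖t‖ < 1 := by rwa [Real.norm_of_nonneg ht0]
  have h2 : Summable fun n : ℕ => (n : ℝ) ^ 2 * t ^ n :=
    summable_pow_mul_geometric_of_norm_lt_one 2 hnorm
  have h1 : Summable fun n : ℕ => (n : ℝ) * t ^ n := by
    simpa using summable_pow_mul_geometric_of_norm_lt_one 1 hnorm
  have h0 : Summable fun n : ℕ => t ^ n := summable_geometric_of_lt_one ht0 ht
  rw [← summable_nat_add_iff 1]
  have : (fun n : ℕ => ((n + 1 : ℕ) : ℝ) ^ 2 * t ^ (n + 1 - 1))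
      = fun n : ℕ => ((n : ℝ) ^ 2 * t ^ n + (2 * ((n : ℝ) * t ^ n) + t ^ n)) := by
    funext n
    push_cast
    ring
  rw [this]
  exact h2.add ((h1.mul_left 2).add h0)

private lemma tsum_sq_geo {t : ℝ} (ht0 : 0 ≤ t) (ht : t < 1) :
    ∑' n : ℕ, (n : ℝ) ^ 2 * t ^ (n - 1) = (1 + t) / (1 - t) ^ 3 := by
  have hnorm : ‖t‖ < 1 := by rwa [Real.norm_of_nonneg ht0]
  have h2 : Summable fun n : ℕ => (n : ℝ) ^ 2 * t ^ n :=
    summable_pow_mul_geometric_of_norm_lt_one 2 hnorm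
  have h1 : Summable fun n : ℕ => (n : ℝ) * t ^ n := by
    simpa using summable_pow_mul_geometric_of_norm_lt_one 1 hnorm
  have h0 : Summable fun n : ℕ => t ^ n := summable_geometric_of_lt_one ht0 ht
  have hS := summable_sq_geo ht0 ht
  set S := ∑' n : ℕ, (n : ℝ) ^ 2 * t ^ (n - 1) with hSdef
  have hmulr : ∑' n : ℕ, (n : ℝ) ^ 2 * t ^ n = S * t := by
    rw [hSdef, ← tsum_mul_right]
    congr 1; funext n
    cases n with
    | zero => simp
    | succ m => rw [mul_assoc, ← pow_succ]; norm_num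
  have key : S = S * t + (2 * (t / (1 - t) ^ 2) + (1 - t)⁻¹) := by
    calc S = (0 : ℝ) ^ 2 * t ^ (0 - 1) + ∑' n : ℕ, ((n + 1 : ℕ) : ℝ) ^ 2 * t ^ (n + 1 - 1) := by
            rw [hSdef, Summable.tsum_eq_zero_add hS]; norm_num
      _ = ∑' n : ℕ, ((n : ℝ) ^ 2 * t ^ n + (2 * ((n : ℝ) * t ^ n) + t ^ n)) := by
            rw [show ((0:ℝ)^2 * t^(0-1) : ℝ) = 0 from by norm_num, zero_add]
            congr 1; funext n; push_cast; ring
      _ = (∑' n : ℕ, (n : ℝ) ^ 2 * t ^ n) + ∑' n : ℕ, (2 * ((n : ℝ) * t ^ n) + t ^ n) :=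
            Summable.tsum_add h2 ((h1.mul_left 2).add h0)
      _ = S * t + ((2 : ℝ) * ∑' n : ℕ, (n : ℝ) * t ^ n) + ∑' n : ℕ, t ^ n := by
            rw [Summable.tsum_add (h1.mul_left 2) h0, hmulr, tsum_mul_left]; ring
      _ = S * t + (2 * (t / (1 - t) ^ 2) + (1 - t)⁻¹) := by
            rw [tsum_coe_mul_geometric_of_norm_lt_one hnorm, tsum_geometric_of_lt_one ht0 ht]
            ring
  have h1t : (1 : ℝ) - t ≠ 0 := by linarith
  have hS' : S = (2 * (t / (1 - t) ^ 2) + (1 - t)⁻¹) / (1 - t) := by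
    rw [eq_div_iff h1t]
    have e : S * (1 - t) = S - S * t := by ring
    rw [e]; linarith [key]
  rw [hS']
  field_simp
  ring

private lemma lp_norm_sq (V : H2) : ‖V‖ ^ 2 = ∑' n, ‖V n‖ ^ 2 := by
  have h := lp.norm_rpow_eq_tsum (p := 2) (by norm_num) V
  simp only [ENNReal.toReal_ofNat] at h
  rw [show ((2:ℝ)) = ((2:ℕ):ℝ) by norm_num] at h
  simp only [Real.rpow_natCast] at h
  exact h

/-- If `A_{f,φ}` is a bounded Liouville weighted composition operator on `H²`, then
for every `w ∈ 𝔻`,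
`|f(w)|²|φ′(w)|²(1−|w|²)(1+|φ(w)|²)/(1−|φ(w)|²)³ ≤ ‖A_{f,φ}‖²`;
in particular the supremum of this quantity over the disc is finite. -/
theorem weighted_bounded_necessary (f φ : ℂ → ℂ)
    (hf : AnalyticOnNhd ℂ f (ball (0 : ℂ) 1))
    (hφ : AnalyticOnNhd ℂ φ (ball (0 : ℂ) 1))
    (hφmap : ∀ z ∈ ball (0 : ℂ) 1, φ z ∈ ball (0 : ℂ) 1)
    (A : H2 →L[ℂ] H2)
    (hA : ∀ g : H2, ∀ z ∈ ball (0 : ℂ) 1,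
      hardyEval (A g) z = f z * deriv φ z * deriv (hardyEval g) (φ z)) :
    ∀ w ∈ ball (0 : ℂ) 1,
      ‖f w‖ ^ 2 * ‖deriv φ w‖ ^ 2 * (1 - ‖w‖ ^ 2) *
        ((1 + ‖φ w‖ ^ 2) / (1 - ‖φ w‖ ^ 2) ^ 3) ≤ ‖A‖ ^ 2 := by
  intro w hw
  have hw1 : ‖w‖ < 1 := by simpa [mem_ball, Complex.dist_eq] using hw
  set u : ℂ := φ w with hu_def
  have hu1 : ‖u‖ < 1 := by
    have := hφmap w hw
    simpa [mem_ball, Complex.dist_eq] using this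
  set r : ℝ := ‖u‖ ^ 2 with hr_def
  set s : ℝ := ‖w‖ ^ 2 with hs_def
  have hr0 : 0 ≤ r := by positivity
  have hr1 : r < 1 := by nlinarith [norm_nonneg u]
  have hs0 : 0 ≤ s := by positivity
  have hs1 : s < 1 := by nlinarith [norm_nonneg w]
  -- the "derivative kernel" vector
  set vfun : ℕ → ℂ := fun n => (starRingEnd ℂ) ((n : ℂ) * u ^ (n - 1)) with hvfun_def
  have hvnorm : ∀ n : ℕ, ‖vfun n‖ = (n : ℝ) * ‖u‖ ^ (n - 1) := by
    intro n
    simp [hvfun_def, norm_mul, norm_pow]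
  have hvnormsq : ∀ n : ℕ, ‖vfun n‖ ^ 2 = (n : ℝ) ^ 2 * r ^ (n - 1) := by
    intro n
    rw [hvnorm n, mul_pow, hr_def, ← pow_mul, ← pow_mul, Nat.mul_comm]
  have hsumv : Summable fun n : ℕ => ‖vfun n‖ ^ 2 := by
    refine (summable_sq_geo hr0 hr1).congr fun n => ?_
    rw [hvnormsq n]
  have hVmem : Memℓp vfun 2 := by
    apply memℓp_gen
    simp only [ENNReal.toReal_ofNat]
    rw [show ((2:ℝ)) = ((2:ℕ):ℝ) by norm_num]
    simpa only [Real.rpow_natCast] using hsumv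
  set V : H2 := ⟨vfun, hVmem⟩ with hV_def
  have hVapp : ∀ n, V n = vfun n := fun n => rfl
  -- ‖V‖² = Σ = (1+r)/(1-r)³
  set Sg : ℝ := (1 + r) / (1 - r) ^ 3 with hSg_def
  have hVsq : ‖V‖ ^ 2 = Sg := by
    rw [lp_norm_sq V, hSg_def, ← tsum_sq_geo hr0 hr1]
    exact tsum_congr fun n => hvnormsq n
  have hSgpos : 0 < Sg := by
    have h1r : (0:ℝ) < 1 - r := by linarith
    have h3 : (0:ℝ) < (1 - r) ^ 3 := pow_pos h1r 3
    rw [hSg_def]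
    exact div_pos (by linarith) h3
  have hVpos : 0 < ‖V‖ := by
    have h := hVsq
    nlinarith [norm_nonneg V]
  -- the derivative of hardyEval V at u
  set R : ℝ := (1 + ‖u‖) / 2 with hR_def
  have hR1 : R < 1 := by rw [hR_def]; linarith
  have hRu : ‖u‖ < R := by rw [hR_def]; linarith
  have hR0 : 0 < R := by rw [hR_def]; positivity
  have hder : HasDerivAt (hardyEval V) (∑' n : ℕ, vfun n * ((n : ℂ) * u ^ (n - 1))) u := by
    have heq : hardyEval V = fun z => ∑' n : ℕ, vfun n * z ^ n := by
      funext z; rfl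
    rw [heq]
    refine hasDerivAt_tsum_of_isPreconnected
      (u := fun n : ℕ => (n : ℝ) ^ 2 * R ^ (n - 1))
      (g' := fun n y => vfun n * ((n : ℂ) * y ^ (n - 1)))
      (summable_sq_geo hR0.le hR1) isOpen_ball
      (convex_ball (0:ℂ) R).isPreconnected
      (fun n y _ => ((hasDerivAt_pow n y).const_mul (vfun n)))
      (fun n y hy => ?_) (mem_ball_self hR0) ?_ ?_
    · -- bound
      have hy' : ‖y‖ < R := by simpa [mem_ball, Complex.dist_eq] using hy
      have h1 : ‖vfun n * ((n : ℂ) * y ^ (n - 1))‖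
          = ((n : ℝ) * ‖u‖ ^ (n - 1)) * ((n : ℝ) * ‖y‖ ^ (n - 1)) := by
        rw [norm_mul, hvnorm n, norm_mul, norm_pow, Complex.norm_natCast]
      rw [h1]
      have hub : ‖u‖ ^ (n - 1) ≤ 1 := pow_le_one₀ (norm_nonneg u) hu1.le
      have hyb : ‖y‖ ^ (n - 1) ≤ R ^ (n - 1) :=
        pow_le_pow_left₀ (norm_nonneg y) hy'.le _
      have hn0 : (0:ℝ) ≤ (n:ℝ) := Nat.cast_nonneg n
      calc ((n : ℝ) * ‖u‖ ^ (n - 1)) * ((n : ℝ) * ‖y‖ ^ (n - 1))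
          ≤ ((n : ℝ) * 1) * ((n : ℝ) * R ^ (n - 1)) := by
            apply mul_le_mul
            · exact mul_le_mul_of_nonneg_left hub hn0
            · exact mul_le_mul_of_nonneg_left hyb hn0
            · positivity
            · positivity
        _ = (n : ℝ) ^ 2 * R ^ (n - 1) := by ring
    · -- summable at 0
      refine summable_zero.congr fun n => ?_
      cases n with
      | zero => simp [hvfun_def]
      | succ m => simp
    · -- u ∈ ball 0 R
      simpa [mem_ball, Complex.dist_eq] using hRu
  -- compute the derivative value: it is (Sg : ℂ)
  have hsumv' : Summable fun n : ℕ => vfun n * ((n : ℂ) * u ^ (n - 1)) := by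
    apply Summable.of_norm
    refine hsumv.congr fun n => ?_
    have hx : ‖vfun n‖ = ‖(n : ℂ) * u ^ (n - 1)‖ := RCLike.norm_conj _
    rw [norm_mul, ← hx, sq]
  have hDval : (∑' n : ℕ, vfun n * ((n : ℂ) * u ^ (n - 1))) = ((Sg : ℝ) : ℂ) := by
    have h1 : ∀ n : ℕ, vfun n * ((n : ℂ) * u ^ (n - 1))
        = ((‖vfun n‖ ^ 2 : ℝ) : ℂ) := by
      intro n
      have hx : ‖vfun n‖ = ‖(n : ℂ) * u ^ (n - 1)‖ := RCLike.norm_conj _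
      rw [hx]
      rw [show vfun n = (starRingEnd ℂ) ((n : ℂ) * u ^ (n - 1)) from rfl,
        Complex.conj_mul']
      norm_cast
    rw [tsum_congr h1, ← Complex.ofReal_tsum]
    congr 1
    rw [tsum_congr hvnormsq, tsum_sq_geo hr0 hr1, hSg_def]
  have hDeriv : deriv (hardyEval V) u = ((Sg : ℝ) : ℂ) := by
    rw [hder.deriv, hDval]
  -- the reproducing kernel at w
  set Kfun : ℕ → ℂ := fun n => (conj w) ^ n with hK_def
  have hKnormsq : ∀ n : ℕ, ‖Kfun n‖ ^ 2 = s ^ n := by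
    intro n
    rw [show Kfun n = (conj w) ^ n from rfl, norm_pow, RCLike.norm_conj,
      ← pow_mul, hs_def, ← pow_mul, Nat.mul_comm]
  have hsumK : Summable fun n : ℕ => ‖Kfun n‖ ^ 2 :=
    (summable_geometric_of_lt_one hs0 hs1).congr fun n => (hKnormsq n).symm
  have hKmem : Memℓp Kfun 2 := by
    apply memℓp_gen
    simp only [ENNReal.toReal_ofNat]
    rw [show ((2:ℝ)) = ((2:ℕ):ℝ) by norm_num]
    simpa only [Real.rpow_natCast] using hsumK
  set K : H2 := ⟨Kfun, hKmem⟩ with hKV_def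
  have hKsq : ‖K‖ ^ 2 = (1 - s)⁻¹ := by
    rw [lp_norm_sq K, tsum_congr hKnormsq, tsum_geometric_of_lt_one hs0 hs1]
  -- hardyEval (A V) w as an inner product
  have hinner : (inner ℂ K (A V) : ℂ) = hardyEval (A V) w := by
    rw [lp.inner_eq_tsum]
    refine tsum_congr fun n => ?_
    have : (inner ℂ (K n) ((A V) n) : ℂ) = (starRingEnd ℂ) (K n) * (A V) n := RCLike.inner_apply' _ _
    rw [this, show K n = (conj w) ^ n from rfl, map_pow, Complex.conj_conj,
      mul_comm]
  have hbound : ‖hardyEval (A V) w‖ ≤ ‖K‖ * (‖A‖ * ‖V‖) := by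
    rw [← hinner]
    exact le_trans (norm_inner_le_norm K (A V))
      (mul_le_mul_of_nonneg_left (A.le_opNorm V) (norm_nonneg K))
  have hEval : hardyEval (A V) w = (f w * deriv φ w) * ((Sg : ℝ) : ℂ) := by
    rw [hA V w hw, ← hu_def, hDeriv]
  have hnormEval : ‖hardyEval (A V) w‖ = ‖f w‖ * ‖deriv φ w‖ * Sg := by
    rw [hEval, norm_mul, norm_mul, Complex.norm_real,
      Real.norm_of_nonneg hSgpos.le]
  have key1 : ‖f w‖ * ‖deriv φ w‖ * Sg ≤ ‖K‖ * (‖A‖ * ‖V‖) := by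
    rw [← hnormEval]; exact hbound
  have key2 : ‖f w‖ * ‖deriv φ w‖ * ‖V‖ ≤ ‖K‖ * ‖A‖ := by
    apply le_of_mul_le_mul_right _ hVpos
    calc (‖f w‖ * ‖deriv φ w‖ * ‖V‖) * ‖V‖
        = ‖f w‖ * ‖deriv φ w‖ * ‖V‖ ^ 2 := by ring
      _ = ‖f w‖ * ‖deriv φ w‖ * Sg := by rw [hVsq]
      _ ≤ ‖K‖ * (‖A‖ * ‖V‖) := key1
      _ = ‖K‖ * ‖A‖ * ‖V‖ := by ring
  have key3 : (‖f w‖ * ‖deriv φ w‖) ^ 2 * Sg ≤ (1 - s)⁻¹ * ‖A‖ ^ 2 := by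
    have hsq := mul_self_le_mul_self (by positivity) key2
    have e : (‖f w‖ * ‖deriv φ w‖ * ‖V‖) * (‖f w‖ * ‖deriv φ w‖ * ‖V‖)
        = (‖f w‖ * ‖deriv φ w‖) ^ 2 * ‖V‖ ^ 2 := by ring
    rw [e, hVsq] at hsq
    calc (‖f w‖ * ‖deriv φ w‖) ^ 2 * Sg
        ≤ (‖K‖ * ‖A‖) * (‖K‖ * ‖A‖) := hsq
      _ = ‖K‖ ^ 2 * ‖A‖ ^ 2 := by ring
      _ = (1 - s)⁻¹ * ‖A‖ ^ 2 := by rw [hKsq]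
  have h1s : (0:ℝ) < 1 - s := by linarith
  calc ‖f w‖ ^ 2 * ‖deriv φ w‖ ^ 2 * (1 - s) * Sg
      = (‖f w‖ * ‖deriv φ w‖) ^ 2 * Sg * (1 - s) := by ring
    _ ≤ (1 - s)⁻¹ * ‖A‖ ^ 2 * (1 - s) :=
        mul_le_mul_of_nonneg_right key3 h1s.le
    _ = ‖A‖ ^ 2 := by
        rw [mul_comm ((1 - s)⁻¹) (‖A‖ ^ 2), mul_assoc,
          inv_mul_cancel₀ (ne_of_gt h1s), mul_one]
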